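/- For every complex number z with |z| < 1, the identity (z² − 1) · ∑_{j=0}^∞ z^{2j+1}/(2j+1) = −z + ∑_{j=1}^∞ (2/(4j² − 1)) z^{2j+1} holds, where the series on the right-hand side converges absolutely for all |z| ≤ 1. -/

import Mathlib

lemma aux_ne (j : ℕ) : (2 * (j : ℂ) + 1) ≠ 0 := by
  have : ((2 * j + 1 : ℕ) : ℂ) ≠ 0 := Nat.cast_ne_zero.mpr (by omega)
  intro hc; apply this; push_cast; linear_combination hc

lemma aux_ne' (j : ℕ) : (2 * ((j : ℂ) + 1) + 1) ≠ 0 := by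
  have : ((2 * (j + 1) + 1 : ℕ) : ℂ) ≠ 0 := Nat.cast_ne_zero.mpr (by omega)
  intro hc; apply this; push_cast; linear_combination hc

lemma summable_f {z : ℂ} (hz : ‖z‖ < 1) :
    Summable (fun j : ℕ => z ^ (2 * j + 1) / (2 * (j : ℂ) + 1)) := by
  apply Summable.of_norm
  have hg : Summable (fun j : ℕ => ‖z‖ ^ (2 * j + 1)) := by
    have : Summable (fun j : ℕ => ‖z‖ * (‖z‖ ^ 2) ^ j) := by
      apply Summable.mul_left
      exact summable_geometric_of_lt_one (by positivity)
        (by nlinarith [norm_nonneg z])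
    convert this using 2 with j
    rw [pow_add, pow_mul, pow_one, mul_comm]
  apply Summable.of_nonneg_of_le (fun j => norm_nonneg _) (fun j => ?_) hg
  rw [norm_div, norm_pow]
  have h1 : (1 : ℝ) ≤ ‖2 * (j : ℂ) + 1‖ := by
    have : (2 * (j : ℂ) + 1) = ((2 * j + 1 : ℕ) : ℂ) := by push_cast; ring
    rw [this, Complex.norm_natCast]
    exact_mod_cast Nat.one_le_iff_ne_zero.mpr (by omega)
  calc ‖z‖ ^ (2 * j + 1) / ‖2 * (j : ℂ) + 1‖
      ≤ ‖z‖ ^ (2 * j + 1) / 1 := by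
        apply div_le_div_of_nonneg_left ?_ one_pos h1 <;> positivity
    _ = ‖z‖ ^ (2 * j + 1) := by rw [div_one]

/-- Center series of the square wave: for `|z| < 1`,
`(z² - 1) · ∑_{j≥0} z^{2j+1}/(2j+1) = -z + ∑_{j≥1} (2/(4j² - 1)) z^{2j+1}`,
where the right-hand series converges absolutely for all `|z| ≤ 1`. -/
theorem stmt_14 :
    (∀ z : ℂ, ‖z‖ < 1 →
      (z ^ 2 - 1) * ∑' j : ℕ, z ^ (2 * j + 1) / (2 * (j : ℂ) + 1) =
        -z + ∑' j : ℕ,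
          (2 / (4 * ((j : ℂ) + 1) ^ 2 - 1)) * z ^ (2 * (j + 1) + 1)) ∧
    (∀ z : ℂ, ‖z‖ ≤ 1 →
      Summable (fun j : ℕ =>
        ‖(2 / (4 * ((j : ℂ) + 1) ^ 2 - 1)) * z ^ (2 * (j + 1) + 1)‖)) := by
  constructor
  · intro z hz
    set f : ℕ → ℂ := fun j => z ^ (2 * j + 1) / (2 * (j : ℂ) + 1) with hf
    have hsum : Summable f := summable_f hz
    have hA : Summable (fun j : ℕ => z ^ (2 * (j + 1) + 1) / (2 * (j : ℂ) + 1)) := by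
      have := hsum.mul_left (z ^ 2)
      convert this using 2 with j
      show z ^ (2 * (j + 1) + 1) / (2 * (j : ℂ) + 1) = z ^ 2 * (z ^ (2 * j + 1) / (2 * (j : ℂ) + 1))
      rw [show 2 * (j + 1) + 1 = (2 * j + 1) + 2 by ring, pow_add]
      ring
      rfl
    have hB : Summable (fun j : ℕ => f (j + 1)) :=
      (summable_nat_add_iff 1).mpr hsum
    have key : (z ^ 2 - 1) * ∑' j : ℕ, f j
        = (∑' j : ℕ, z ^ (2 * (j + 1) + 1) / (2 * (j : ℂ) + 1)) - ∑' j : ℕ, f j := by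
      rw [sub_mul, one_mul]
      congr 1
      rw [← tsum_mul_left]
      congr 1; ext j
      simp only [hf]
      rw [show 2 * (j + 1) + 1 = (2 * j + 1) + 2 by ring, pow_add]
      ring
    rw [key, hsum.tsum_eq_zero_add]
    have hf0 : f 0 = z := by simp [hf]
    rw [hf0]
    have : ∀ j : ℕ, z ^ (2 * (j + 1) + 1) / (2 * (j : ℂ) + 1) - f (j + 1)
        = (2 / (4 * ((j : ℂ) + 1) ^ 2 - 1)) * z ^ (2 * (j + 1) + 1) := by
      intro j
      simp only [hf]
      push_cast
      have h1 := aux_ne j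
      have h2 := aux_ne' j
      have h3 : (4 * ((j : ℂ) + 1) ^ 2 - 1) ≠ 0 := by
        intro h
        apply h1
        have : (2 * (j : ℂ) + 1) * (2 * ((j : ℂ) + 1) + 1) = 0 := by
          linear_combination h
        rcases mul_eq_zero.mp this with h | h
        · exact h
        · exact absurd h h2
      rw [div_sub_div _ _ h1 h2, div_mul_eq_mul_div, div_eq_div_iff (mul_ne_zero h1 h2) h3]
      ring
    have hAB : (∑' j : ℕ, z ^ (2 * (j + 1) + 1) / (2 * (j : ℂ) + 1)) - ∑' j : ℕ, f (j + 1)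
        = ∑' j : ℕ, (2 / (4 * ((j : ℂ) + 1) ^ 2 - 1)) * z ^ (2 * (j + 1) + 1) := by
      rw [← hA.tsum_sub hB]; exact tsum_congr this
    rw [← hAB]; ring
  · intro z hz
    have hmaj : Summable (fun j : ℕ => (1 : ℝ) / ((j : ℝ) + 1) ^ 2) := by
      have : Summable (fun n : ℕ => (1 : ℝ) / (n : ℝ) ^ 2) :=
        Real.summable_one_div_nat_pow.mpr one_lt_two
      have := (summable_nat_add_iff 1).mpr this
      convert this using 2 with j
      push_cast; rfl
      norm_num
    apply Summable.of_nonneg_of_le (fun j => norm_nonneg _) (fun j => ?_) hmaj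
    have hden : (0 : ℝ) < 4 * ((j : ℝ) + 1) ^ 2 - 1 := by nlinarith [sq_nonneg (j : ℝ), (Nat.cast_nonneg j : (0:ℝ) ≤ j)]
    have hcoef : (2 / (4 * ((j : ℂ) + 1) ^ 2 - 1))
        = (((2 / (4 * ((j : ℝ) + 1) ^ 2 - 1) : ℝ)) : ℂ) := by push_cast; ring
    rw [norm_mul, hcoef, Complex.norm_real, Real.norm_eq_abs,
      abs_of_pos (by positivity), norm_pow]
    have hz' : ‖z‖ ^ (2 * (j + 1) + 1) ≤ 1 := pow_le_one₀ (norm_nonneg z) hz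
    calc 2 / (4 * ((j : ℝ) + 1) ^ 2 - 1) * ‖z‖ ^ (2 * (j + 1) + 1)
        ≤ 2 / (4 * ((j : ℝ) + 1) ^ 2 - 1) * 1 := by
          apply mul_le_mul_of_nonneg_left hz' (by positivity)
      _ ≤ 1 / ((j : ℝ) + 1) ^ 2 := by
          rw [mul_one, div_le_div_iff₀ hden (by positivity)]
          nlinarith [sq_nonneg (j : ℝ), (Nat.cast_nonneg j : (0:ℝ) ≤ j)]
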